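/- Assume regularity condition (H). Then there exists a unique p_B ∈ (0,1) satisfying D_B(p_B) = 0, i.e., satisfying the implicit equation p_B·f(p_B) = 1 − F(p_B) + (λ·J/(1−λ))·∫_{p_B}^1 F(v − p_B)^{J−1} f(v) dv. (This p_B is the posted price in the unique symmetric data-augmented bidding equilibrium.) -/
import Mathlib


open intervalIntegral

/-- Under regularity condition (H), there exists a unique
p_B ∈ (0,1) solving the bidding first-order condition; this is the posted
price in the unique symmetric data-augmented bidding equilibrium. -/
theorem bidding_equilibrium_price_exists_unique
    (f F : ℝ → ℝ)
    (hf_cont : ContinuousOn f (Set.Icc 0 1))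
    (hf_pos : ∀ x ∈ Set.Icc (0:ℝ) 1, 0 < f x)
    (hf_logconcave : ConcaveOn ℝ (Set.Icc 0 1) (Real.log ∘ f))
    (hf_int : (∫ t in (0:ℝ)..1, f t) = 1)
    (hF : ∀ x, F x = ∫ t in (0:ℝ)..x, f t)
    (J : ℕ) (hJ : 2 ≤ J)
    (lam : ℝ) (hlam : lam ∈ Set.Ioo (0:ℝ) 1)
    (hreg : AntitoneOn (fun p : ℝ => 1 - F p - p * f p) (Set.Icc 0 1)) :
    ∃! pB : ℝ, pB ∈ Set.Ioo (0:ℝ) 1 ∧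
      (1 - lam) * (1 - F pB - pB * f pB)
        + lam * (J : ℝ) * (∫ v in pB..1, F (v - pB) ^ (J - 1) * f v) = 0 := by
  obtain ⟨hlam0, hlam1⟩ := hlam
  -- continuity of F on [0,1]
  have hFc : ContinuousOn F (Set.Icc 0 1) := by
    have h1 : MeasureTheory.IntegrableOn f (Set.uIcc (0:ℝ) 1) := by
      rw [Set.uIcc_of_le zero_le_one]
      exact hf_cont.integrableOn_Icc
    have h2 := intervalIntegral.continuousOn_primitive_interval (a := (0:ℝ)) (b := 1)
        (μ := MeasureTheory.volume) h1
    rw [Set.uIcc_of_le zero_le_one] at h2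
    have : F = fun x => ∫ t in (0:ℝ)..x, f t := funext hF
    rw [this]
    exact h2
  -- strict monotonicity of F on [0,1]
  have hFmono : StrictMonoOn F (Set.Icc 0 1) := by
    intro x hx y hy hxy
    have hsub1 : Set.uIcc 0 x ⊆ Set.Icc (0:ℝ) 1 := by
      rw [Set.uIcc_of_le hx.1]; exact Set.Icc_subset_Icc le_rfl hx.2
    have hsub2 : Set.uIcc x y ⊆ Set.Icc (0:ℝ) 1 := by
      rw [Set.uIcc_of_le hxy.le]; exact Set.Icc_subset_Icc hx.1 hy.2
    have hi1 : IntervalIntegrable f MeasureTheory.volume 0 x :=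
      (hf_cont.mono hsub1).intervalIntegrable
    have hi2 : IntervalIntegrable f MeasureTheory.volume x y :=
      (hf_cont.mono hsub2).intervalIntegrable
    have hsum := intervalIntegral.integral_add_adjacent_intervals hi1 hi2
    have hdiff : F y - F x = ∫ t in x..y, f t := by
      rw [hF, hF, ← hsum]; ring
    have hpos : 0 < ∫ t in x..y, f t := by
      refine intervalIntegral.intervalIntegral_pos_of_pos_on hi2 (fun t ht => ?_) hxy
      exact hf_pos t ⟨hx.1.trans ht.1.le, ht.2.le.trans hy.2⟩
    linarith
  have hF0 : F 0 = 0 := by rw [hF]; simp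
  have hF1 : F 1 = 1 := by rw [hF]; exact hf_int
  have hFnonneg : ∀ x ∈ Set.Icc (0:ℝ) 1, 0 ≤ F x := by
    intro x hx
    rcases eq_or_lt_of_le hx.1 with h | h
    · rw [← h, hF0]
    · have := hFmono (Set.left_mem_Icc.2 zero_le_one) hx h
      linarith [hF0 ▸ this]
  -- continuous extensions of f and F to ℝ
  set fe : ℝ → ℝ := Set.IccExtend zero_le_one ((Set.Icc (0:ℝ) 1).restrict f) with hfe_def
  set Fe : ℝ → ℝ := Set.IccExtend zero_le_one ((Set.Icc (0:ℝ) 1).restrict F) with hFe_def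
  have hfe_cont : Continuous fe := (hf_cont.restrict).Icc_extend'
  have hFe_cont : Continuous Fe := (hFc.restrict).Icc_extend'
  have hfe_eq : ∀ x ∈ Set.Icc (0:ℝ) 1, fe x = f x := by
    intro x hx; rw [hfe_def, Set.IccExtend_of_mem _ _ hx]; rfl
  have hFe_eq : ∀ x ∈ Set.Icc (0:ℝ) 1, Fe x = F x := by
    intro x hx; rw [hFe_def, Set.IccExtend_of_mem _ _ hx]; rfl
  have hfe_pos : ∀ x, 0 < fe x := by
    intro x
    exact hf_pos _ (Set.projIcc (0:ℝ) 1 zero_le_one x).2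
  have hFe_nonneg : ∀ x, 0 ≤ Fe x := by
    intro x
    exact hFnonneg _ (Set.projIcc (0:ℝ) 1 zero_le_one x).2
  -- the auction/integral term, with extended functions
  set G : ℝ → ℝ := fun p => ∫ v in p..1, Fe (v - p) ^ (J - 1) * fe v with hG_def
  have hint_cont : ∀ p : ℝ, Continuous fun v => Fe (v - p) ^ (J - 1) * fe v := by
    intro p
    exact ((hFe_cont.comp (continuous_id.sub continuous_const)).pow _).mul hfe_cont
  have hG_cont : Continuous G := by
    have huncurry : Continuous (Function.uncurry fun p v : ℝ => Fe (v - p) ^ (J - 1) * fe v) := by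
      apply Continuous.mul
      · exact (hFe_cont.comp (continuous_snd.sub continuous_fst)).pow _
      · exact hfe_cont.comp continuous_snd
    have h := intervalIntegral.continuous_parametric_intervalIntegral_of_continuous
        (μ := MeasureTheory.volume) (a₀ := (1:ℝ)) huncurry continuous_id
    have hGneg : G = fun p => -(∫ v in (1:ℝ)..p, Fe (v - p) ^ (J - 1) * fe v) := by
      funext p
      rw [hG_def]
      exact intervalIntegral.integral_symm 1 p
    rw [hGneg]
    exact h.neg
  -- G agrees with the original integral term on [0,1]
  have hG_eq : ∀ p ∈ Set.Icc (0:ℝ) 1,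
      (∫ v in p..1, F (v - p) ^ (J - 1) * f v) = G p := by
    intro p hp
    refine intervalIntegral.integral_congr (fun v hv => ?_)
    rw [Set.uIcc_of_le hp.2] at hv
    have hv1 : v ∈ Set.Icc (0:ℝ) 1 := ⟨hp.1.trans hv.1, hv.2⟩
    have hv2 : v - p ∈ Set.Icc (0:ℝ) 1 := ⟨by linarith [hv.1], by linarith [hv1.2, hp.1]⟩
    rw [hfe_eq v hv1, hFe_eq _ hv2]
  -- endpoint values
  have hG1 : G 1 = 0 := by rw [hG_def]; simp
  have hG0 : 0 ≤ G 0 := by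
    refine intervalIntegral.integral_nonneg zero_le_one (fun u _ => ?_)
    exact mul_nonneg (pow_nonneg (hFe_nonneg _) _) (hfe_pos u).le
  -- strict decrease of G
  have hGdec : ∀ p1 p2 : ℝ, 0 ≤ p1 → p1 < p2 → p2 < 1 → G p2 < G p1 := by
    intro p1 p2 hp1 h12 hp2
    have hi1 : IntervalIntegrable (fun v => Fe (v - p1) ^ (J - 1) * fe v)
        MeasureTheory.volume p1 p2 := (hint_cont p1).intervalIntegrable _ _
    have hi2 : IntervalIntegrable (fun v => Fe (v - p1) ^ (J - 1) * fe v)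
        MeasureTheory.volume p2 1 := (hint_cont p1).intervalIntegrable _ _
    have hi3 : IntervalIntegrable (fun v => Fe (v - p2) ^ (J - 1) * fe v)
        MeasureTheory.volume p2 1 := (hint_cont p2).intervalIntegrable _ _
    have hsplit := intervalIntegral.integral_add_adjacent_intervals hi1 hi2
    have hA : 0 ≤ ∫ v in p1..p2, Fe (v - p1) ^ (J - 1) * fe v := by
      refine intervalIntegral.integral_nonneg h12.le (fun u _ => ?_)
      exact mul_nonneg (pow_nonneg (hFe_nonneg _) _) (hfe_pos u).le
    have hB : 0 < ∫ v in p2..1,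
        (Fe (v - p1) ^ (J - 1) * fe v - Fe (v - p2) ^ (J - 1) * fe v) := by
      refine intervalIntegral.intervalIntegral_pos_of_pos_on (hi2.sub hi3)
        (fun v hv => ?_) hp2
      have hm1 : v - p1 ∈ Set.Icc (0:ℝ) 1 := ⟨by linarith [hv.1], by linarith [hv.2]⟩
      have hm2 : v - p2 ∈ Set.Icc (0:ℝ) 1 := ⟨by linarith [hv.1], by linarith [hv.2]⟩
      have hlt : Fe (v - p2) < Fe (v - p1) := by
        rw [hFe_eq _ hm1, hFe_eq _ hm2]
        exact hFmono hm2 hm1 (by linarith)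
      have hpow : Fe (v - p2) ^ (J - 1) < Fe (v - p1) ^ (J - 1) := by
        refine pow_lt_pow_left₀ hlt (hFe_nonneg _) ?_
        omega
      have := mul_lt_mul_of_pos_right hpow (hfe_pos v)
      linarith
    have hsub := intervalIntegral.integral_sub hi2 hi3
    rw [hsub] at hB
    have : G p1 = (∫ v in p1..p2, Fe (v - p1) ^ (J - 1) * fe v)
        + ∫ v in p2..1, Fe (v - p1) ^ (J - 1) * fe v := by
      rw [hG_def]; exact hsplit.symm
    rw [hG_def] at *
    simp only at this ⊢
    linarith
  -- the full demand-type function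
  set D : ℝ → ℝ := fun p => (1 - lam) * (1 - F p - p * f p) + lam * J * G p with hD_def
  have hD_cont : ContinuousOn D (Set.Icc 0 1) := by
    apply ContinuousOn.add
    · exact continuousOn_const.mul
        ((continuousOn_const.sub hFc).sub (continuousOn_id.mul hf_cont))
    · exact (continuous_const.mul hG_cont).continuousOn
  have hJpos : (0:ℝ) < J := by positivity
  have hD0 : 0 < D 0 := by
    have : D 0 = (1 - lam) * (1 - F 0 - 0 * f 0) + lam * J * G 0 := rfl
    rw [this, hF0]
    have h1 : 0 < (1 - lam) * (1 - 0 - 0 * f 0) := by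
      rw [zero_mul]; norm_num; linarith
    nlinarith [mul_pos hlam0 hJpos]
  have hD1 : D 1 < 0 := by
    have : D 1 = (1 - lam) * (1 - F 1 - 1 * f 1) + lam * J * G 1 := rfl
    rw [this, hF1, hG1]
    have hf1 : 0 < f 1 := hf_pos 1 (Set.right_mem_Icc.2 zero_le_one)
    nlinarith
  -- existence via IVT
  obtain ⟨p, hpmem, hDp⟩ := intermediate_value_Ioo' zero_le_one hD_cont ⟨hD1, hD0⟩
  -- strict decrease of D on (0,1)
  have hDdec : ∀ q1 q2 : ℝ, q1 ∈ Set.Ioo (0:ℝ) 1 → q2 ∈ Set.Ioo (0:ℝ) 1 → q1 < q2 →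
      D q2 < D q1 := by
    intro q1 q2 hq1 hq2 h12
    have hh : 1 - F q2 - q2 * f q2 ≤ 1 - F q1 - q1 * f q1 :=
      hreg ⟨hq1.1.le, hq1.2.le⟩ ⟨hq2.1.le, hq2.2.le⟩ h12.le
    have hg := hGdec q1 q2 hq1.1.le h12 hq2.2
    have h1 := mul_le_mul_of_nonneg_left hh (by linarith : (0:ℝ) ≤ 1 - lam)
    have h2 := mul_lt_mul_of_pos_left hg (mul_pos hlam0 hJpos)
    simp only [hD_def]
    linarith
  -- the statement's equation, rephrased through D
  have hkey : ∀ q ∈ Set.Ioo (0:ℝ) 1,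
      ((1 - lam) * (1 - F q - q * f q)
        + lam * (J : ℝ) * (∫ v in q..1, F (v - q) ^ (J - 1) * f v) = 0) ↔ D q = 0 := by
    intro q hq
    rw [hG_eq q ⟨hq.1.le, hq.2.le⟩]
  refine ⟨p, ⟨hpmem, (hkey p hpmem).2 hDp⟩, ?_⟩
  rintro q ⟨hqmem, hq⟩
  have hDq : D q = 0 := (hkey q hqmem).1 hq
  rcases lt_trichotomy q p with h | h | h
  · have := hDdec q p hqmem hpmem h
    rw [hDp, hDq] at this; exact absurd this (lt_irrefl 0)
  · exact h
  · have := hDdec p q hpmem hqmem h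
    rw [hDp, hDq] at this; exact absurd this (lt_irrefl 0)
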